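/- arXiv:2203.04124 — 2 statements merged into one kernel-verified Lean document; each statement's English description precedes it below -/
import Mathlib

section
/- Let L be a linear functional on the real vector space F = {x ↦ x† G x : G Hermitian n×n} of functions on the unit sphere of ℂⁿ. Then L satisfies L(g) ≥ inf g for all g ∈ F if and only if there exists a Hermitian positive semidefinite matrix M with Tr(M) = 1 such that L(x ↦ x†Gx) = Tr(GM) for every Hermitian G. -/
open Matrix
open scoped ComplexOrder

section Aux

variable {n : ℕ}

private lemma star_pi_single (i : Fin n) :
    star (Pi.single i (1:ℂ)) = (Pi.single i 1 : Fin n → ℂ) := by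
  ext j; simp [Pi.single_apply, apply_ite]

/-- trace of a product of two PSD matrices is nonnegative. -/
private lemma psd_trace_nonneg {A B : Matrix (Fin n) (Fin n) ℂ}
    (hA : A.PosSemidef) (hB : B.PosSemidef) : 0 ≤ (A * B).trace := by
  have hB' : ∃ C : Matrix (Fin n) (Fin n) ℂ, B = Cᴴ * C := by
    open scoped MatrixOrder in exact CStarAlgebra.nonneg_iff_eq_star_mul_self.mp hB.nonneg
  obtain ⟨C, rfl⟩ := hB'
  have h1 : (A * (Cᴴ * C)).trace = (C * A * Cᴴ).trace := by
    rw [← Matrix.mul_assoc, Matrix.trace_mul_cycle]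
  rw [h1]
  have hN : (C * A * Cᴴ).PosSemidef := hA.mul_mul_conjTranspose_same C
  rw [Matrix.trace]
  refine Finset.sum_nonneg fun i _ => ?_
  simpa [star_pi_single, Matrix.mulVec_single, single_dotProduct] using
    hN.dotProduct_mulVec_nonneg (Pi.single i 1)

private lemma stdE_ct (j k : Fin n) :
    (Matrix.single j k (1:ℂ))ᴴ = Matrix.single k j 1 := by
  ext p q
  simp only [conjTranspose_apply, Matrix.single, Matrix.of_apply]
  rw [apply_ite star]
  simp [and_comm]

/-- the real Hermitian basis matrices `E_jk + E_kj`. -/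
private noncomputable def Am (j k : Fin n) : Matrix (Fin n) (Fin n) ℂ :=
  Matrix.single j k 1 + Matrix.single k j 1

/-- the imaginary Hermitian basis matrices `i E_jk - i E_kj`. -/
private noncomputable def Bm (j k : Fin n) : Matrix (Fin n) (Fin n) ℂ :=
  Complex.I • Matrix.single j k 1 - Complex.I • Matrix.single k j 1

private lemma Am_symm (j k : Fin n) : Am k j = Am j k := add_comm _ _

private lemma Am_herm (j k : Fin n) : (Am j k).IsHermitian := by
  unfold Am Matrix.IsHermitian
  rw [conjTranspose_add, stdE_ct, stdE_ct, add_comm]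

private lemma Bm_neg (j k : Fin n) : Bm k j = -Bm j k := by
  unfold Bm; abel

private lemma Bm_herm (j k : Fin n) : (Bm j k).IsHermitian := by
  unfold Bm Matrix.IsHermitian
  rw [conjTranspose_sub, conjTranspose_smul, conjTranspose_smul, stdE_ct, stdE_ct]
  simp [Complex.conj_I]
  abel

private lemma herm_smul (r : ℝ) {A : Matrix (Fin n) (Fin n) ℂ} (hA : A.IsHermitian) :
    (r • A).IsHermitian := by
  unfold Matrix.IsHermitian
  rw [conjTranspose_smul, star_trivial, hA]

/-- decomposition of a Hermitian matrix in the Hermitian basis. -/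
private lemma decomp (G : Matrix (Fin n) (Fin n) ℂ) (hG : G.IsHermitian) :
    (∑ p : Fin n × Fin n, ((G p.1 p.2).re • Am p.1 p.2 + (G p.1 p.2).im • Bm p.1 p.2))
      = (2:ℝ) • G := by
  ext i j
  have hji : G j i = starRingEnd ℂ (G i j) := by
    conv_lhs => rw [← hG]
    simp [conjTranspose_apply]
  have hre : (G j i).re = (G i j).re := by rw [hji]; simp
  have him : (G j i).im = -(G i j).im := by rw [hji]; simp
  simp only [Matrix.sum_apply, Matrix.add_apply, Matrix.smul_apply, Am, Bm,
    Matrix.sub_apply, Matrix.single, Matrix.of_apply, smul_eq_mul,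
    Fintype.sum_prod_type, Complex.real_smul, ite_and, mul_ite, mul_one, mul_zero,
    mul_sub, mul_add]
  simp only [Finset.sum_add_distrib, Finset.sum_sub_distrib, Finset.sum_ite_irrel,
    Finset.sum_const_zero, Finset.sum_ite_eq, Finset.sum_ite_eq', Finset.mem_univ, if_true]
  simp [Complex.ext_iff, hre, him]
  constructor <;> ring

/-- additivity of `L` over finite sums of Hermitian matrices. -/
private lemma L_sum (L : Matrix (Fin n) (Fin n) ℂ → ℝ)
    (hadd : ∀ G H : Matrix (Fin n) (Fin n) ℂ,
      G.IsHermitian → H.IsHermitian → L (G + H) = L G + L H)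
    (hzero : L 0 = 0)
    {ι : Type*} (s : Finset ι) (f : ι → Matrix (Fin n) (Fin n) ℂ)
    (hf : ∀ i, (f i).IsHermitian) :
    L (∑ i ∈ s, f i) = ∑ i ∈ s, L (f i) := by
  classical
  induction s using Finset.induction_on with
  | empty => simpa
  | insert a s h ih =>
    have hsum : (∑ i ∈ s, f i).IsHermitian := by
      unfold Matrix.IsHermitian
      rw [conjTranspose_sum]
      exact Finset.sum_congr rfl fun i _ => hf i
    rw [Finset.sum_insert h, Finset.sum_insert h, hadd _ _ (hf a) hsum, ih]

/-- for Hermitian `G`, the quadratic form `v ↦ v† G v` is real. -/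
private lemma herm_dot_im {G : Matrix (Fin n) (Fin n) ℂ} (hG : G.IsHermitian)
    (v : Fin n → ℂ) : (star v ⬝ᵥ G *ᵥ v).im = 0 := by
  have hstar : star (star v ⬝ᵥ G *ᵥ v) = star v ⬝ᵥ G *ᵥ v := by
    conv_lhs => rw [star_dotProduct, star_star, star_mulVec]
    rw [← Matrix.dotProduct_mulVec, hG]
  have := congrArg Complex.im hstar
  simp only [Complex.star_def, Complex.conj_im] at this
  linarith

private lemma trace_vecMulVec (v : Fin n → ℂ) (M : Matrix (Fin n) (Fin n) ℂ) :
    (vecMulVec v (star v) * M).trace = star v ⬝ᵥ M *ᵥ v := by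
  simp only [Matrix.trace, Matrix.diag_apply, Matrix.mul_apply, vecMulVec_apply,
    dotProduct, Matrix.mulVec, Pi.star_apply, Finset.mul_sum, Finset.sum_mul]
  rw [Finset.sum_comm]
  refine Finset.sum_congr rfl fun k _ => Finset.sum_congr rfl fun j _ => by ring

private lemma vecMulVec_herm (v : Fin n → ℂ) : (vecMulVec v (star v)).IsHermitian := by
  unfold Matrix.IsHermitian
  ext i j
  simp [vecMulVec_apply, conjTranspose_apply, mul_comm]

end Aux

/-- representation theorem for one-particle systems:
a real-linear functional on the space of quadratic forms x ↦ x†Gx (G Hermitian)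
on the unit sphere of ℂⁿ dominates the infimum of each quadratic form iff it is
represented as L(x ↦ x†Gx) = Tr(GM) for a Hermitian PSD matrix M of trace 1.
(Since a Hermitian G is uniquely determined by the function x ↦ x†Gx on the
sphere, we parametrise the elements of F by their Hermitian matrices.) -/
theorem representation_one_particle
    {n : ℕ} (hn : 0 < n)
    (L : Matrix (Fin n) (Fin n) ℂ → ℝ)
    (hadd : ∀ G H : Matrix (Fin n) (Fin n) ℂ,
      G.IsHermitian → H.IsHermitian → L (G + H) = L G + L H)
    (hsmul : ∀ (c : ℝ) (G : Matrix (Fin n) (Fin n) ℂ),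
      G.IsHermitian → L (c • G) = c * L G) :
    (∀ G : Matrix (Fin n) (Fin n) ℂ, G.IsHermitian →
        (⨅ x : {x : Fin n → ℂ // star x ⬝ᵥ x = 1}, ((star x.1 ⬝ᵥ G *ᵥ x.1).re : ℝ)) ≤ L G)
      ↔
    (∃ M : Matrix (Fin n) (Fin n) ℂ, M.PosSemidef ∧ M.trace = 1 ∧
        ∀ G : Matrix (Fin n) (Fin n) ℂ, G.IsHermitian → L G = ((G * M).trace).re) := by
  classical
  have hzero : L 0 = 0 := by
    have := hsmul 0 0 isHermitian_zero
    simpa using this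
  -- the sphere is nonempty
  have hsphere : Nonempty {x : Fin n → ℂ // star x ⬝ᵥ x = 1} := by
    refine ⟨⟨Pi.single ⟨0, hn⟩ 1, ?_⟩⟩
    rw [star_pi_single, single_dotProduct]
    simp
  constructor
  · -- forward direction
    intro hL
    -- the representing matrix
    set M : Matrix (Fin n) (Fin n) ℂ :=
      Matrix.of fun k j => ((L (Am j k) / 2 : ℝ) : ℂ) - ((L (Bm j k) / 2 : ℝ) : ℂ) * Complex.I
      with hM_def
    have hMre : ∀ j k : Fin n, (M k j).re = L (Am j k) / 2 := by
      intro j k; simp [hM_def]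
    have hMim : ∀ j k : Fin n, (M k j).im = -(L (Bm j k) / 2) := by
      intro j k; simp [hM_def]
    -- key representation formula
    have key : ∀ G : Matrix (Fin n) (Fin n) ℂ, G.IsHermitian →
        L G = ((G * M).trace).re := by
      intro G hG
      have hterm : ∀ p : Fin n × Fin n,
          ((G p.1 p.2).re • Am p.1 p.2 + (G p.1 p.2).im • Bm p.1 p.2).IsHermitian :=
        fun p => (herm_smul _ (Am_herm _ _)).add (herm_smul _ (Bm_herm _ _))
      have hGdec : G = (2⁻¹ : ℝ) • (∑ p : Fin n × Fin n,
          ((G p.1 p.2).re • Am p.1 p.2 + (G p.1 p.2).im • Bm p.1 p.2)) := by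
        rw [decomp G hG, smul_smul]; norm_num
      have hLG : L G = 2⁻¹ * ∑ p : Fin n × Fin n,
          ((G p.1 p.2).re * L (Am p.1 p.2) + (G p.1 p.2).im * L (Bm p.1 p.2)) := by
        conv_lhs => rw [hGdec]
        rw [hsmul _ _ (by
          unfold Matrix.IsHermitian
          rw [conjTranspose_sum]
          exact Finset.sum_congr rfl fun p _ => hterm p)]
        rw [L_sum L hadd hzero _ _ hterm]
        congr 1
        refine Finset.sum_congr rfl fun p _ => ?_
        rw [hadd _ _ (herm_smul _ (Am_herm _ _)) (herm_smul _ (Bm_herm _ _)),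
          hsmul _ _ (Am_herm _ _), hsmul _ _ (Bm_herm _ _)]
      rw [hLG]
      -- compute the trace side
      have htr : ((G * M).trace).re
          = ∑ p : Fin n × Fin n, ((G p.1 p.2).re * (M p.2 p.1).re
              - (G p.1 p.2).im * (M p.2 p.1).im) := by
        rw [Matrix.trace, Complex.re_sum, Fintype.sum_prod_type]
        refine Finset.sum_congr rfl fun j _ => ?_
        rw [Matrix.diag_apply, Matrix.mul_apply, Complex.re_sum]
        exact Finset.sum_congr rfl fun k _ => by rw [Complex.mul_re]
      rw [htr]
      rw [Finset.mul_sum]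
      refine Finset.sum_congr rfl fun p _ => ?_
      rw [hMre, hMim]
      ring
    -- L 1 = 1
    have hL1 : L 1 = 1 := by
      have h1 : (1:ℝ) ≤ L 1 := by
        have := hL 1 isHermitian_one
        have hconst : (fun x : {x : Fin n → ℂ // star x ⬝ᵥ x = 1} =>
            ((star x.1 ⬝ᵥ (1 : Matrix (Fin n) (Fin n) ℂ) *ᵥ x.1).re : ℝ)) = fun _ => 1 := by
          funext x
          rw [Matrix.one_mulVec, x.2]
          simp
        rw [show (⨅ x : {x : Fin n → ℂ // star x ⬝ᵥ x = 1},
            ((star x.1 ⬝ᵥ (1 : Matrix (Fin n) (Fin n) ℂ) *ᵥ x.1).re : ℝ)) = 1 by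
          rw [iInf, hconst]; exact ciInf_const] at this
        exact this
      have h2 : L 1 ≤ 1 := by
        have := hL ((-1:ℝ) • 1) (herm_smul _ isHermitian_one)
        rw [hsmul _ _ isHermitian_one] at this
        have hconst : (fun x : {x : Fin n → ℂ // star x ⬝ᵥ x = 1} =>
            ((star x.1 ⬝ᵥ (((-1:ℝ) • 1 : Matrix (Fin n) (Fin n) ℂ)) *ᵥ x.1).re : ℝ))
            = fun _ => -1 := by
          funext x
          rw [Matrix.smul_mulVec, Matrix.one_mulVec, dotProduct_smul, x.2]
          simp
        rw [show (⨅ x : {x : Fin n → ℂ // star x ⬝ᵥ x = 1},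
            ((star x.1 ⬝ᵥ (((-1:ℝ) • 1 : Matrix (Fin n) (Fin n) ℂ)) *ᵥ x.1).re : ℝ)) = -1 by
          rw [iInf, hconst]; exact ciInf_const] at this
        linarith
      linarith
    -- M is Hermitian
    have hMherm : M.IsHermitian := by
      unfold Matrix.IsHermitian
      ext k j
      have h1 : L (Am k j) = L (Am j k) := by rw [Am_symm]
      have h2 : L (Bm k j) = -L (Bm j k) := by
        rw [Bm_neg, show -Bm j k = (-1:ℝ) • Bm j k by simp, hsmul _ _ (Bm_herm _ _)]
        ring
      simp only [conjTranspose_apply, hM_def, Matrix.of_apply]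
      rw [h1, h2]
      simp [Complex.ext_iff]
      ring
    -- trace M = 1
    have hMtr : M.trace = 1 := by
      have h1 : ((1 : Matrix (Fin n) (Fin n) ℂ) * M).trace = M.trace := by rw [Matrix.one_mul]
      have h2 := key 1 isHermitian_one
      rw [h1, hL1] at h2
      have him : M.trace.im = 0 := by
        have := congrArg Matrix.trace hMherm
        rw [trace_conjTranspose] at this
        have := congrArg Complex.im this
        simp only [Complex.star_def, Complex.conj_im] at this
        linarith
      apply Complex.ext
      · simpa using h2.symm
      · simpa using him
    -- M is PSD
    have hMpsd : M.PosSemidef := by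
      refine Matrix.PosSemidef.of_dotProduct_mulVec_nonneg hMherm fun v => ?_
      have hG := vecMulVec_herm v
      have hkey := key _ hG
      have htr := trace_vecMulVec v M
      have hnn : (0:ℝ) ≤ L (vecMulVec v (star v)) := by
        refine le_trans (Real.iInf_nonneg fun x => ?_) (hL _ hG)
        have hval : star x.1 ⬝ᵥ (vecMulVec v (star v)) *ᵥ x.1
            = (star x.1 ⬝ᵥ v) * star (star x.1 ⬝ᵥ v) := by
          simp only [Matrix.mulVec, vecMulVec_apply, dotProduct, Pi.star_apply,
            star_sum, star_mul', star_star, Finset.mul_sum, Finset.sum_mul]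
          rw [Finset.sum_comm]
          refine Finset.sum_congr rfl fun a _ => Finset.sum_congr rfl fun b _ => by ring
        rw [hval, Complex.star_def, Complex.mul_conj]
        simp [Complex.normSq_nonneg]
      rw [Complex.nonneg_iff]
      constructor
      · rw [← htr, ← hkey]; exact hnn
      · exact (herm_dot_im hMherm v).symm
    exact ⟨M, hMpsd, hMtr, key⟩
  · -- backward direction
    rintro ⟨M, hMpsd, hMtr, hrep⟩ G hG
    rw [hrep G hG]
    set c := (⨅ x : {x : Fin n → ℂ // star x ⬝ᵥ x = 1}, ((star x.1 ⬝ᵥ G *ᵥ x.1).re : ℝ))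
      with hc_def
    -- the range is bounded below
    have hbdd : BddBelow (Set.range fun x : {x : Fin n → ℂ // star x ⬝ᵥ x = 1} =>
        ((star x.1 ⬝ᵥ G *ᵥ x.1).re : ℝ)) := by
      refine ⟨-(∑ p : Fin n × Fin n, ‖G p.1 p.2‖), ?_⟩
      rintro r ⟨x, rfl⟩
      have hxb : ∀ i, ‖x.1 i‖ ≤ 1 := by
        intro i
        have h1 : ∑ j, Complex.normSq (x.1 j) = 1 := by
          have h0 := congrArg Complex.re x.2
          simp only [dotProduct, Pi.star_apply, Complex.re_sum, Complex.one_re] at h0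
          rw [← h0]
          refine Finset.sum_congr rfl fun j _ => ?_
          simp [Complex.normSq_apply, Complex.mul_re]
        have h2 : Complex.normSq (x.1 i) ≤ 1 := by
          rw [← h1]
          exact Finset.single_le_sum (fun j _ => Complex.normSq_nonneg _) (Finset.mem_univ i)
        rw [← Real.sqrt_one]
        rw [Complex.norm_def]
        exact Real.sqrt_le_sqrt h2
      have habs : ‖star x.1 ⬝ᵥ G *ᵥ x.1‖ ≤ ∑ p : Fin n × Fin n,
          ‖G p.1 p.2‖ := by
        calc ‖star x.1 ⬝ᵥ G *ᵥ x.1‖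
            = ‖∑ p : Fin n × Fin n, star (x.1 p.1) * G p.1 p.2 * x.1 p.2‖ := by
              congr 1
              simp only [dotProduct, Matrix.mulVec, Pi.star_apply, Finset.mul_sum,
                Fintype.sum_prod_type]
              exact Finset.sum_congr rfl fun a _ => Finset.sum_congr rfl fun b _ => by ring
          _ ≤ ∑ p : Fin n × Fin n, ‖star (x.1 p.1) * G p.1 p.2 * x.1 p.2‖ := by
              exact norm_sum_le _ _
          _ ≤ ∑ p : Fin n × Fin n, ‖G p.1 p.2‖ := by
              refine Finset.sum_le_sum fun p _ => ?_
              rw [norm_mul, norm_mul]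
              have e1 : ‖star (x.1 p.1)‖ = ‖x.1 p.1‖ := by
                rw [Complex.star_def, Complex.norm_conj]
              rw [e1]
              calc ‖x.1 p.1‖ * ‖G p.1 p.2‖ * ‖x.1 p.2‖
                  ≤ 1 * ‖G p.1 p.2‖ * 1 := by
                    refine mul_le_mul (mul_le_mul (hxb p.1) le_rfl (norm_nonneg _)
                      zero_le_one) (hxb p.2) (norm_nonneg _) (by positivity)
                _ = ‖G p.1 p.2‖ := by ring
      have := neg_abs_le ((star x.1 ⬝ᵥ G *ᵥ x.1).re)
      have h3 : |(star x.1 ⬝ᵥ G *ᵥ x.1).re| ≤ ‖star x.1 ⬝ᵥ G *ᵥ x.1‖ :=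
        Complex.abs_re_le_norm _
      linarith
    -- G - c • 1 is PSD
    have hpsd : (G - (c : ℂ) • 1).PosSemidef := by
      refine Matrix.PosSemidef.of_dotProduct_mulVec_nonneg ?_ ?_
      · refine hG.sub ?_
        unfold Matrix.IsHermitian
        rw [conjTranspose_smul, conjTranspose_one]
        congr 1
        simp
      · intro v
        by_cases hv : v = 0
        · simp [hv]
        · set t : ℝ := ∑ i, Complex.normSq (v i) with ht_def
          have htpos : 0 < t := by
            obtain ⟨i, hi⟩ := Function.ne_iff.mp hv
            refine Finset.sum_pos' (fun j _ => Complex.normSq_nonneg _)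
              ⟨i, Finset.mem_univ i, ?_⟩
            exact Complex.normSq_pos.mpr hi
          have hvv : star v ⬝ᵥ v = (t : ℂ) := by
            simp only [dotProduct, Pi.star_apply, ht_def]
            push_cast
            exact Finset.sum_congr rfl fun i _ => by
              rw [Complex.normSq_eq_conj_mul_self]; rfl
          -- normalize
          set s : ℝ := Real.sqrt t with hs_def
          have hs2 : s * s = t := Real.mul_self_sqrt htpos.le
          have hsne : (s : ℝ) ≠ 0 := by positivity
          set u : Fin n → ℂ := ((s⁻¹ : ℝ) : ℂ) • v with hu_def
          have huu : star u ⬝ᵥ u = 1 := by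
            rw [hu_def]
            rw [star_smul, smul_dotProduct, dotProduct_smul, hvv]
            simp only [smul_eq_mul, Complex.star_def, Complex.conj_ofReal]
            rw [← Complex.ofReal_mul, ← Complex.ofReal_mul]
            rw [show s⁻¹ * (s⁻¹ * t) = t / (s * s) by field_simp, hs2]
            field_simp
            simp
          have hle : c ≤ (star u ⬝ᵥ G *ᵥ u).re := ciInf_le hbdd ⟨u, huu⟩
          have huGu : star u ⬝ᵥ G *ᵥ u = ((t⁻¹ : ℝ) : ℂ) * (star v ⬝ᵥ G *ᵥ v) := by
            rw [hu_def, star_smul, smul_dotProduct, Matrix.mulVec_smul, dotProduct_smul]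
            simp only [smul_eq_mul, Complex.star_def, Complex.conj_ofReal]
            rw [← mul_assoc, ← Complex.ofReal_mul]
            congr 2
            rw [← hs2]
            field_simp
          rw [huGu] at hle
          have hre : (((t⁻¹ : ℝ) : ℂ) * (star v ⬝ᵥ G *ᵥ v)).re
              = t⁻¹ * (star v ⬝ᵥ G *ᵥ v).re := by
            simp [Complex.mul_re]
          rw [hre] at hle
          have hvGv_re : c * t ≤ (star v ⬝ᵥ G *ᵥ v).re := by
            have := mul_le_mul_of_nonneg_right hle htpos.le
            rwa [inv_mul_eq_div, div_mul_cancel₀] at this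
            exact htpos.ne'
          have hcompute : star v ⬝ᵥ (G - (c : ℂ) • 1) *ᵥ v
              = star v ⬝ᵥ G *ᵥ v - (c : ℂ) * (t : ℂ) := by
            rw [Matrix.sub_mulVec, dotProduct_sub]
            congr 1
            rw [Matrix.smul_mulVec, Matrix.one_mulVec, dotProduct_smul, hvv]
            simp
          rw [hcompute, Complex.nonneg_iff]
          constructor
          · simp only [Complex.sub_re, Complex.mul_re, Complex.ofReal_re, Complex.ofReal_im,
              mul_zero, zero_mul, sub_zero]
            linarith [hvGv_re]
          · have him := herm_dot_im hG v
            simp [him]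
    have htr_nonneg : 0 ≤ ((G - (c : ℂ) • 1) * M).trace := psd_trace_nonneg hpsd hMpsd
    have hexpand : ((G - (c : ℂ) • 1) * M).trace = (G * M).trace - (c : ℂ) := by
      rw [Matrix.sub_mul, Matrix.trace_sub, Matrix.smul_mul, Matrix.one_mul,
        Matrix.trace_smul, hMtr]
      simp
    rw [hexpand] at htr_nonneg
    rw [Complex.nonneg_iff] at htr_nonneg
    have := htr_nonneg.1
    simp only [Complex.sub_re, Complex.ofReal_re] at this
    linarith
end

section
/- Let W be the 4×4 Hermitian matrix with diagonal (0.25, 2.25, 2.25, 0.25) and entries W₁₄ = W₄₁ = −1, W₂₃ = W₃₂ = −1, all other off-diagonal entries 0. Then its eigenvalues are {−0.75, 1.25, 1.25, 3.25}; in particular Tr(W ρ_e) = −0.75 < 0 for the density matrix ρ_e = (1/2)(e₁+e₄)(e₁+e₄)ᵀ, while (x⊗y)†W(x⊗y) ≥ 0.25 for all unit vectors x, y ∈ ℂ². -/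
open Matrix

/-- The entanglement witness W of Eq. (34). -/
noncomputable def Wwit : Matrix (Fin 4) (Fin 4) ℂ :=
  !![1/4, 0, 0, -1; 0, 9/4, -1, 0; 0, -1, 9/4, 0; -1, 0, 0, 1/4]

/-- The maximally entangled state ρ_e = (1/2)(e₁+e₄)(e₁+e₄)ᵀ. -/
noncomputable def rhoE : Matrix (Fin 4) (Fin 4) ℂ :=
  !![1/2, 0, 0, 1/2; 0, 0, 0, 0; 0, 0, 0, 0; 1/2, 0, 0, 1/2]

/-- Reindexing Fin 2 × Fin 2 ≅ Fin 4 in the order (x₁y₁, x₁y₂, x₂y₁, x₂y₂). -/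
def pairIdx (p : Fin 2 × Fin 2) : Fin 4 := ⟨2 * p.1.val + p.2.val, by omega⟩

open Polynomial in
private lemma eval_cp_aux (M : Matrix (Fin 4) (Fin 4) ℂ) (x : ℂ) :
    M.charpoly.eval x = (Matrix.scalar (Fin 4) x - M).det := by
  rw [Matrix.charpoly, eval_det, matPolyEquiv_charmatrix]
  simp

open Polynomial in
private lemma eigenvalues_multiset_aux (hW : Wwit.IsHermitian) :
    Finset.univ.val.map hW.eigenvalues = ({-3/4, 5/4, 5/4, 13/4} : Multiset ℝ) := by
  set U : Matrix (Fin 4) (Fin 4) ℂ :=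
    (Matrix.IsHermitian.eigenvectorUnitary hW : Matrix (Fin 4) (Fin 4) ℂ) with hUdef
  have hU1 : U * star U = 1 :=
    (Matrix.mem_unitaryGroup_iff).mp (Matrix.IsHermitian.eigenvectorUnitary hW).2
  have h2 : Wwit.charpoly
      = ((Finset.univ.val.map (fun i => ((hW.eigenvalues i : ℝ) : ℂ))).map
          (fun a => X - C a)).prod := by
    apply Polynomial.funext; intro x
    rw [eval_cp_aux]
    have key : Matrix.scalar (Fin 4) x - Wwit
        = U * (Matrix.scalar (Fin 4) x - diagonal (RCLike.ofReal ∘ hW.eigenvalues)) * star U := by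
      rw [mul_sub, sub_mul]
      congr 1
      · rw [mul_assoc, (Matrix.scalar_commute x (fun r => Commute.all _ r) (star U)).eq,
          ← mul_assoc, hU1, one_mul]
      · exact hW.spectral_theorem
    rw [key, det_mul, det_mul, mul_right_comm, ← det_mul, hU1, det_one, one_mul]
    have hd : Matrix.scalar (Fin 4) x - diagonal (RCLike.ofReal ∘ hW.eigenvalues)
        = diagonal (fun i => x - ((hW.eigenvalues i : ℝ) : ℂ)) := by
      rw [show Matrix.scalar (Fin 4) x = diagonal (fun _ => x) from rfl, diagonal_sub]
      rfl
    rw [hd, det_diagonal, Multiset.map_map, eval_multiset_prod, Multiset.map_map]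
    rw [show (Finset.univ.prod fun i => x - ((hW.eigenvalues i : ℝ) : ℂ))
        = (Finset.univ.val.map fun i => x - ((hW.eigenvalues i : ℝ) : ℂ)).prod from rfl]
    congr 1
    apply Multiset.map_congr rfl
    intro i _
    simp
  have h1 : Wwit.charpoly
      = ((({-3/4, 5/4, 5/4, 13/4} : Multiset ℂ)).map (fun a => X - C a)).prod := by
    apply Polynomial.funext; intro x
    rw [eval_cp_aux]
    have hm : Matrix.scalar (Fin 4) x - Wwit
        = !![x - 1/4, 0, 0, 1; 0, x - 9/4, 1, 0; 0, 1, x - 9/4, 0; 1, 0, 0, x - 1/4] := by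
      ext i j
      fin_cases i <;> fin_cases j <;>
        simp [Wwit, Matrix.scalar_apply, Matrix.diagonal, Matrix.vecHead, Matrix.vecTail]
    rw [hm]
    simp [Matrix.det_succ_row_zero, Fin.sum_univ_succ, Matrix.vecHead, Matrix.vecTail,
      Fin.succAbove, Fin.castSucc, Fin.castAdd, Fin.castLE]
    ring
  have hroots := congrArg Polynomial.roots (h1.symm.trans h2)
  rw [Polynomial.roots_multiset_prod_X_sub_C, Polynomial.roots_multiset_prod_X_sub_C] at hroots
  have hmap : Multiset.map (fun r : ℝ => (r : ℂ)) (Finset.univ.val.map hW.eigenvalues)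
      = Multiset.map (fun r : ℝ => (r : ℂ)) ({-3/4, 5/4, 5/4, 13/4} : Multiset ℝ) := by
    rw [Multiset.map_map,
      show ((fun r : ℝ => (r : ℂ)) ∘ hW.eigenvalues)
        = (fun i => ((hW.eigenvalues i : ℝ) : ℂ)) from rfl,
      ← hroots]
    norm_num
  exact Multiset.map_injective Complex.ofReal_injective hmap

/-- W has eigenvalues {−3/4, 5/4, 5/4, 13/4};
Tr(W ρ_e) = −3/4 < 0; and (x⊗y)†W(x⊗y) ≥ 1/4 on unit vectors x,y ∈ ℂ². -/
theorem witness_W_properties (hW : Wwit.IsHermitian) :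
    (Finset.univ.val.map hW.eigenvalues = ({-3/4, 5/4, 5/4, 13/4} : Multiset ℝ)) ∧
    ((Wwit * rhoE).trace = (-3/4 : ℂ)) ∧
    (∀ x y : Fin 2 → ℂ, star x ⬝ᵥ x = 1 → star y ⬝ᵥ y = 1 →
      (1/4 : ℝ) ≤ (star (fun p : Fin 2 × Fin 2 => x p.1 * y p.2) ⬝ᵥ
        (Wwit.submatrix pairIdx pairIdx) *ᵥ
          (fun p : Fin 2 × Fin 2 => x p.1 * y p.2)).re) := by
  refine ⟨eigenvalues_multiset_aux hW, ?_, ?_⟩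
  · simp [Wwit, rhoE, Matrix.trace, Fin.sum_univ_four, Matrix.vecHead, Matrix.vecTail,
      Matrix.mul_apply]
    norm_num
  · intro x y hx hy
    have hx' := congrArg Complex.re hx
    have hy' := congrArg Complex.re hy
    simp [dotProduct, Matrix.mulVec, Fin.sum_univ_two, Complex.add_re, Complex.mul_re,
      Complex.conj_re, Complex.conj_im] at hx' hy'
    simp [dotProduct, Matrix.mulVec, Fintype.sum_prod_type, Fin.sum_univ_two,
      Matrix.submatrix_apply, pairIdx, Wwit, Complex.add_re, Complex.mul_re, Complex.conj_re,
      Complex.conj_im]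
    set a := (x 0).re; set b := (x 0).im; set c := (x 1).re; set d := (x 1).im
    set e := (y 0).re; set f := (y 0).im; set g := (y 1).re; set h := (y 1).im
    nlinarith [sq_nonneg (a*g - c*e), sq_nonneg (a*h - c*f), sq_nonneg (b*g - d*e),
      sq_nonneg (b*h - d*f), sq_nonneg (a*g + c*e), sq_nonneg (a*e - c*g), sq_nonneg (b*f - d*h)]
end
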